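/- Let v₁, …, v_n be a basis of ℝⁿ, Λ = {Σᵢ cᵢvᵢ : cᵢ ∈ ℤ} the lattice it spans, U = {Σᵢ tᵢvᵢ : tᵢ ∈ [0,1)} its unit cell, d the diameter of U, M ⊂ U a finite motif of exactly m ≥ 1 points, S = M + Λ, V_n the Lebesgue volume of the unit ball of ℝⁿ, and PPC(S) = (vol(U)/(m·V_n))^{1/n}. Then for every p ∈ S and every r ≥ 0, the intersection of S with the closed Euclidean ball B̄(p,r) is finite and its cardinality satisfies |S ∩ B̄(p,r)| ≤ ((r + d)/PPC(S))ⁿ, equivalently |S ∩ B̄(p,r)|·vol(U) ≤ m·V_n·(r + d)ⁿ. -/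

import Mathlib

open scoped ENNReal
open scoped Pointwise

/-- Let `Λ` be the lattice spanned by a basis `v₁,…,v_n` of
`ℝⁿ`, `U = {Σ tᵢvᵢ : tᵢ ∈ [0,1)}` its unit cell with diameter `d`, `M ⊂ U` a
motif of exactly `m ≥ 1` points and `S = M + Λ`. Then for every `p ∈ S` and
`r ≥ 0` the set `S ∩ B̄(p,r)` is finite and
`|S ∩ B̄(p,r)| ≤ ((r+d)/PPC(S))ⁿ`, equivalently
`|S ∩ B̄(p,r)|·vol(U) ≤ m·V_n·(r+d)ⁿ` where `V_n` is the volume of the unit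
ball of `ℝⁿ`. -/
theorem stmt_14 (n m : ℕ) (hn : 1 ≤ n) (hm : 1 ≤ m)
    (v : Module.Basis (Fin n) ℝ (EuclideanSpace ℝ (Fin n)))
    (Λ : Set (EuclideanSpace ℝ (Fin n)))
    (hΛ : Λ = {x | ∃ c : Fin n → ℤ, x = ∑ i, (c i : ℝ) • v i})
    (U : Set (EuclideanSpace ℝ (Fin n)))
    (hU : U = {x | ∃ t : Fin n → ℝ, (∀ i, t i ∈ Set.Ico (0 : ℝ) 1) ∧
      x = ∑ i, t i • v i})
    (d : ℝ) (hd : d = Metric.diam U)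
    (M : Finset (EuclideanSpace ℝ (Fin n))) (hMcard : M.card = m)
    (hMU : ∀ a ∈ M, a ∈ U)
    (S : Set (EuclideanSpace ℝ (Fin n)))
    (hS : S = {x | ∃ a ∈ M, ∃ g ∈ Λ, x = a + g}) :
    ∀ p ∈ S, ∀ r : ℝ, 0 ≤ r →
      (S ∩ Metric.closedBall p r).Finite ∧
      ((S ∩ Metric.closedBall p r).ncard : ℝ≥0∞) * MeasureTheory.volume U ≤
        (m : ℝ≥0∞) *
          MeasureTheory.volume (Metric.ball (0 : EuclideanSpace ℝ (Fin n)) 1) *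
          ENNReal.ofReal ((r + d) ^ n) := by
  classical
  intro p hp r hr

  set L : Submodule ℤ (EuclideanSpace ℝ (Fin n)) := Submodule.span ℤ (Set.range v) with hL
  -- Λ is the ℤ-span of the basis
  have hΛL : Λ = (L : Set (EuclideanSpace ℝ (Fin n))) := by
    rw [hΛ]
    ext x
    simp only [Set.mem_setOf_eq, SetLike.mem_coe, hL, Submodule.mem_span_range_iff_exists_fun]
    constructor
    · rintro ⟨c, rfl⟩
      exact ⟨c, by simp [Int.cast_smul_eq_zsmul]⟩
    · rintro ⟨c, rfl⟩
      exact ⟨c, by simp [Int.cast_smul_eq_zsmul]⟩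
  -- U is the fundamental domain of v
  have hUF : U = ZSpan.fundamentalDomain v := by
    rw [hU]
    ext x
    simp only [Set.mem_setOf_eq, ZSpan.mem_fundamentalDomain]
    constructor
    · rintro ⟨t, ht, rfl⟩
      intro i
      rw [Module.Basis.repr_sum_self]
      exact ht i
    · intro h
      exact ⟨fun i => v.repr x i, h, (v.sum_repr x).symm⟩
  have hUmeas : MeasurableSet U := by
    rw [hUF]; exact ZSpan.fundamentalDomain_measurableSet v
  have hUbd : Bornology.IsBounded U := by
    rw [hUF]; exact ZSpan.fundamentalDomain_isBounded v
  have h0U : (0 : EuclideanSpace ℝ (Fin n)) ∈ U := by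
    rw [hU]
    exact ⟨fun _ => 0, fun i => ⟨le_refl _, one_pos⟩, by simp⟩
  have hdnn : 0 ≤ d := hd ▸ Metric.diam_nonneg
  have hnorm : ∀ a ∈ U, ‖a‖ ≤ d := by
    intro a ha
    have := Metric.dist_le_diam_of_mem hUbd ha h0U
    simpa [← hd] using this
  -- the set of lattice translates hit by S ∩ closedBall p r
  set G : Set (EuclideanSpace ℝ (Fin n)) := {g ∈ Λ | ∃ a ∈ M, a + g ∈ Metric.closedBall p r} with hG
  have hGfin : G.Finite := by
    have hdisc : DiscreteTopology (L : Set (EuclideanSpace ℝ (Fin n))) :=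
      inferInstanceAs (DiscreteTopology (Submodule.span ℤ (Set.range v)))
    have hclosed : IsClosed (L : Set (EuclideanSpace ℝ (Fin n))) := by
      have : DiscreteTopology L.toAddSubgroup :=
        inferInstanceAs (DiscreteTopology (Submodule.span ℤ (Set.range v)))
      exact AddSubgroup.isClosed_of_discrete (H := L.toAddSubgroup)
    have hsub : G ⊆ Metric.closedBall p (r + d) ∩ (L : Set (EuclideanSpace ℝ (Fin n))) := by
      rintro g ⟨hgΛ, a, haM, hag⟩
      refine ⟨?_, hΛL ▸ hgΛ⟩
      have h1 : dist (a + g) p ≤ r := Metric.mem_closedBall.mp hag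
      have h2 : dist g (a + g) = ‖a‖ := by
        rw [dist_eq_norm]
        have : g - (a + g) = -a := by abel
        rw [this, norm_neg]
      have := dist_triangle g (a + g) p
      rw [Metric.mem_closedBall]
      calc dist g p ≤ dist g (a + g) + dist (a + g) p := dist_triangle _ _ _
        _ ≤ d + r := add_le_add (h2 ▸ hnorm a (hMU a haM)) h1
        _ = r + d := add_comm _ _
    exact Set.Finite.subset
      (Metric.finite_isBounded_inter_isClosed DiscreteTopology.isDiscrete Metric.isBounded_closedBall hclosed) hsub
  -- S ∩ ball is contained in sums of M and G
  have hcover : S ∩ Metric.closedBall p r ⊆ Set.image2 (· + ·) (M : Set (EuclideanSpace ℝ (Fin n))) G := by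
    rintro x ⟨hxS, hxB⟩
    rw [hS] at hxS
    obtain ⟨a, haM, g, hgΛ, rfl⟩ := hxS
    exact Set.mem_image2_of_mem haM ⟨hgΛ, a, haM, hxB⟩
  have hfin : (S ∩ Metric.closedBall p r).Finite :=
    Set.Finite.subset (Set.Finite.image2 _ M.finite_toSet hGfin) hcover
  refine ⟨hfin, ?_⟩
  -- cardinality bound
  set Gf : Finset (EuclideanSpace ℝ (Fin n)) := hGfin.toFinset with hGf
  have hcard : (S ∩ Metric.closedBall p r).ncard ≤ m * Gf.card := by
    have h1 : (S ∩ Metric.closedBall p r).ncard ≤ (Set.image2 (· + ·) (M : Set (EuclideanSpace ℝ (Fin n))) G).ncard :=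
      Set.ncard_le_ncard hcover (Set.Finite.image2 _ M.finite_toSet hGfin)
    have h2 : Set.image2 (· + ·) (M : Set (EuclideanSpace ℝ (Fin n))) G = ↑(Finset.image₂ (· + ·) M Gf) := by
      simp [hGf, Set.Finite.coe_toFinset]
    rw [h2, Set.ncard_coe_finset] at h1
    calc (S ∩ Metric.closedBall p r).ncard ≤ (Finset.image₂ (· + ·) M Gf).card := h1
      _ ≤ M.card * Gf.card := Finset.card_image₂_le _ _ _
      _ = m * Gf.card := by rw [hMcard]
  -- volume bound: translated cells are disjoint and inside the big ball
  have hcell_sub : ∀ g ∈ Gf, g +ᵥ U ⊆ Metric.closedBall p (r + d) := by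
    intro g hg
    rw [hGf, Set.Finite.mem_toFinset] at hg
    obtain ⟨hgΛ, a, haM, hag⟩ := hg
    rintro y ⟨u, hu, rfl⟩
    have h1 : dist ((g : EuclideanSpace ℝ (Fin n)) +ᵥ u) (a + g) = dist u a := by
      simp only [vadd_eq_add]
      rw [add_comm a g, dist_add_left]
    have h2 : dist u a ≤ d := hd ▸ Metric.dist_le_diam_of_mem hUbd hu (hMU a haM)
    rw [Metric.mem_closedBall]
    calc dist (g +ᵥ u) p ≤ dist (g +ᵥ u) (a + g) + dist (a + g) p := dist_triangle _ _ _
      _ ≤ d + r := add_le_add (h1 ▸ h2) (Metric.mem_closedBall.mp hag)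
      _ = r + d := add_comm _ _
  have hdisj : (↑Gf : Set (EuclideanSpace ℝ (Fin n))).PairwiseDisjoint (fun g => g +ᵥ U) := by
    intro g₁ hg₁ g₂ hg₂ hne
    rw [Finset.mem_coe, hGf, Set.Finite.mem_toFinset] at hg₁ hg₂
    have hg₁L : g₁ ∈ L := by have h := hg₁.1; rw [hΛL] at h; exact h
    have hg₂L : g₂ ∈ L := by have h := hg₂.1; rw [hΛL] at h; exact h
    rw [Function.onFun, Set.disjoint_left]
    rintro y ⟨u₁, hu₁, hy₁⟩ ⟨u₂, hu₂, hy₂⟩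
    have huniq := ZSpan.exist_unique_vadd_mem_fundamentalDomain v y
    obtain ⟨w, _, hwuniq⟩ := huniq
    have e1 : (⟨-g₁, neg_mem hg₁L⟩ : L) +ᵥ y ∈ ZSpan.fundamentalDomain v := by
      rw [← hUF]
      show -g₁ + y ∈ U
      rw [← hy₁]
      show -g₁ + (g₁ + u₁) ∈ U
      rw [neg_add_cancel_left]
      exact hu₁
    have e2 : (⟨-g₂, neg_mem hg₂L⟩ : L) +ᵥ y ∈ ZSpan.fundamentalDomain v := by
      rw [← hUF]
      show -g₂ + y ∈ U
      rw [← hy₂]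
      show -g₂ + (g₂ + u₂) ∈ U
      rw [neg_add_cancel_left]
      exact hu₂
    have heq := (hwuniq _ e1).trans (hwuniq _ e2).symm
    apply hne
    have hval : (-g₁ : EuclideanSpace ℝ (Fin n)) = -g₂ := congrArg Subtype.val heq
    exact neg_injective hval
  have hmeas : ∀ g ∈ Gf, MeasurableSet (g +ᵥ U) := fun g _ =>
    hUmeas.const_vadd g
  have hsum : (Gf.card : ℝ≥0∞) * MeasureTheory.volume U ≤
      ENNReal.ofReal ((r + d) ^ n) *
        MeasureTheory.volume (Metric.ball (0 : EuclideanSpace ℝ (Fin n)) 1) := by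
    have hvol : ∀ g ∈ Gf, MeasureTheory.volume (g +ᵥ U) = MeasureTheory.volume U := by
      intro g _
      exact MeasureTheory.measure_vadd _ _ _
    have hbiU : MeasureTheory.volume (⋃ g ∈ Gf, (g +ᵥ U)) =
        ∑ g ∈ Gf, MeasureTheory.volume (g +ᵥ U) :=
      MeasureTheory.measure_biUnion_finset hdisj hmeas
    have hsum_eq : ∑ g ∈ Gf, MeasureTheory.volume (g +ᵥ U) =
        (Gf.card : ℝ≥0∞) * MeasureTheory.volume U := by
      rw [Finset.sum_congr rfl hvol, Finset.sum_const, nsmul_eq_mul]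
    have hmono : MeasureTheory.volume (⋃ g ∈ Gf, (g +ᵥ U)) ≤
        MeasureTheory.volume (Metric.closedBall p (r + d)) :=
      MeasureTheory.measure_mono (Set.iUnion₂_subset hcell_sub)
    have hball : MeasureTheory.volume (Metric.closedBall p (r + d)) =
        ENNReal.ofReal ((r + d) ^ n) * MeasureTheory.volume (Metric.ball (0 : EuclideanSpace ℝ (Fin n)) 1) := by
      rw [MeasureTheory.Measure.addHaar_closedBall _ _ (by linarith),
        finrank_euclideanSpace_fin]
    calc (Gf.card : ℝ≥0∞) * MeasureTheory.volume U
        = MeasureTheory.volume (⋃ g ∈ Gf, (g +ᵥ U)) := by rw [hbiU, hsum_eq]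
      _ ≤ _ := hball ▸ hmono
  -- combine
  calc ((S ∩ Metric.closedBall p r).ncard : ℝ≥0∞) * MeasureTheory.volume U
      ≤ ((m * Gf.card : ℕ) : ℝ≥0∞) * MeasureTheory.volume U :=
        mul_le_mul_left (by exact_mod_cast hcard) _
    _ = (m : ℝ≥0∞) * ((Gf.card : ℝ≥0∞) * MeasureTheory.volume U) := by
        push_cast; ring
    _ ≤ (m : ℝ≥0∞) * (ENNReal.ofReal ((r + d) ^ n) *
          MeasureTheory.volume (Metric.ball (0 : EuclideanSpace ℝ (Fin n)) 1)) := by gcongr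
    _ = (m : ℝ≥0∞) * MeasureTheory.volume (Metric.ball (0 : EuclideanSpace ℝ (Fin n)) 1) *
          ENNReal.ofReal ((r + d) ^ n) := by ring
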